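/- Let m be a familial monad on c ⥤ Type (familial and cartesian), let Θ_m be the full subcategory of the Eilenberg–Moore category of m spanned by the free algebras on the arities m[M], and let i : Θ_m ⥤ m-Alg be the inclusion. Then the restricted Yoneda nerve functor N_m : m-Alg ⥤ (Θ_mᵒᵖ ⥤ Type), defined by N_m(X)(M) = Hom_{m-Alg}(i(M), X), is fully faithful. -/

import Mathlib

namespace Fam
open CategoryTheory Opposite Limits
private lemma sigmaExt {α : Type} {β : α → Type} {a a' : α} {b : β a} {b' : β a'}
    (h : a = a') (h' : HEq b b') : (⟨a, b⟩ : Σ x, β x) = ⟨a', b'⟩ := by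
  subst h; cases h'; rfl
variable {c d : Type} [SmallCategory c] [SmallCategory d]
def elHom (pos : c ⥤ Type) {C C' : c} (f : C ⟶ C') (I : pos.obj C) :
    pos.elementsMk C I ⟶ pos.elementsMk C' (pos.map f I) :=
  CategoryOfElements.homMk _ _ f rfl
lemma eqToHom_val {pos : c ⥤ Type} {x y : pos.Elements} (E : x = y) :
    (eqToHom E).val = eqToHom (congrArg Sigma.fst E) := by
  subst E; simp
@[simps]
def famApply (pos : c ⥤ Type) (ar : pos.Elementsᵒᵖ ⥤ d ⥤ Type) :
    (d ⥤ Type) ⥤ c ⥤ Type where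
  obj X :=
    { obj := fun C => Σ I : pos.obj C, ar.obj (op (pos.elementsMk C I)) ⟶ X
      map := fun {C C'} f => TypeCat.ofHom fun x => ⟨pos.map f x.1, ar.map (elHom pos f x.1).op ≫ x.2⟩
      map_id := by
        intro C
        refine ConcreteCategory.ext_apply fun x => ?_
        obtain ⟨I, g⟩ := x
        have h : pos.map (𝟙 C) I = I := by simp
        have hE : pos.elementsMk C I = pos.elementsMk C (pos.map (𝟙 C) I) := by rw [h]
        have he : elHom pos (𝟙 C) I = eqToHom hE := by
          apply CategoryOfElements.ext
          rw [eqToHom_val]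
          simp [elHom]
        dsimp
        refine sigmaExt h ?_
        rw [he]
        simp [eqToHom_op, eqToHom_map]
      map_comp := by
        intro C C' C'' f g
        refine ConcreteCategory.ext_apply fun x => ?_
        obtain ⟨I, u⟩ := x
        have h : pos.map (f ≫ g) I = pos.map g (pos.map f I) := by simp
        have hE : pos.elementsMk C'' (pos.map (f ≫ g) I)
            = pos.elementsMk C'' (pos.map g (pos.map f I)) := by rw [h]
        have hcomp : elHom pos f I ≫ elHom pos g (pos.map f I)
            = elHom pos (f ≫ g) I ≫ eqToHom hE := by
          apply CategoryOfElements.ext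
          rw [CategoryOfElements.comp_val, CategoryOfElements.comp_val, eqToHom_val]
          simp [elHom]
        dsimp
        refine sigmaExt h ?_
        rw [← Category.assoc, ← ar.map_comp, ← op_comp, hcomp, op_comp, ar.map_comp,
          Category.assoc]
        simp [eqToHom_op, eqToHom_map] }
  map {X Y} t :=
    { app := fun C => TypeCat.ofHom fun x => ⟨x.1, x.2 ≫ t⟩
      naturality := by
        intro C C' f
        refine ConcreteCategory.ext_apply fun x => ?_
        dsimp
        rw [Category.assoc] }
  map_id := by
    intro X
    apply NatTrans.ext
    funext C
    refine ConcreteCategory.ext_apply fun x => ?_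
    dsimp
    rw [Category.comp_id]
  map_comp := by
    intro X Y Z s t
    apply NatTrans.ext
    funext C
    refine ConcreteCategory.ext_apply fun x => ?_
    dsimp
    rw [Category.assoc]

/-- The unit exhibiting `famApply pos (ar ⋙ G)` as the right coclosure `⌈F/G⌉`,
i.e. the left Kan extension of the familial functor `F = famApply pos ar` along `G`. -/
def coclosureUnit {e : Type} [SmallCategory e] (pos : c ⥤ Type)
    (ar : pos.Elementsᵒᵖ ⥤ e ⥤ Type) (G : (e ⥤ Type) ⥤ d ⥤ Type) :
    famApply pos ar ⟶ G ⋙ famApply pos (ar ⋙ G) where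
  app X :=
    { app := fun C => TypeCat.ofHom fun x => ⟨x.1, G.map x.2⟩
      naturality := by
        intro C C' f
        refine ConcreteCategory.ext_apply fun x => ?_
        show (⟨pos.map f x.1, G.map (ar.map (elHom pos f x.1).op ≫ x.2)⟩ :
            Σ I : pos.obj C', (ar ⋙ G).obj (op (pos.elementsMk C' I)) ⟶ G.obj X)
          = ⟨pos.map f x.1, G.map (ar.map (elHom pos f x.1).op) ≫ G.map x.2⟩
        rw [G.map_comp] }
  naturality := by
    intro X Y t
    apply NatTrans.ext
    funext C
    refine ConcreteCategory.ext_apply fun x => ?_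
    show (⟨x.1, G.map (x.2 ≫ t)⟩ :
        Σ I : pos.obj C, (ar ⋙ G).obj (op (pos.elementsMk C I)) ⟶ G.obj Y)
      = ⟨x.1, G.map x.2 ≫ G.map t⟩
    rw [G.map_comp]

section Statement5

variable {c : Type} [SmallCategory c]
  (m : Monad (c ⥤ Type)) {posm : c ⥤ Type} (arm : posm.Elementsᵒᵖ ⥤ c ⥤ Type)

/-- The free `m`-algebra on the arity of the operation `M`. -/
def theoryObj (M : posm.Elements) : m.Algebra :=
  m.free.obj (arm.obj (op M))

/-- The theory category `Θ_m`: the full subcategory of the Eilenberg–Moore category of `m`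
spanned by the free algebras on the arities `m[M]`. -/
def Theta : Type :=
  InducedCategory m.Algebra (theoryObj m arm)

instance : Category (Theta m arm) :=
  InducedCategory.instCategory

/-- The inclusion `i : Θ_m ⥤ m-Alg`. -/
def thetaIncl : Theta m arm ⥤ m.Algebra :=
  inducedFunctor (theoryObj m arm)

/-- The nerve functor `N_m : m-Alg ⥤ (Θ_mᵒᵖ ⥤ Type)` (restricted Yoneda):
`N_m(X)(M) = Hom_{m-Alg}(i(M), X)`. -/
def nerveFunctor : m.Algebra ⥤ ((Theta m arm)ᵒᵖ ⥤ Type) :=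
  yoneda ⋙ (Functor.whiskeringLeft (Theta m arm)ᵒᵖ m.Algebraᵒᵖ Type).obj (thetaIncl m arm).op

/-! ### Auxiliary machinery for the proof of the nerve theorem -/

/-- The algebra morphism out of a free algebra adjunct to `u`. -/
def hAdj {A : c ⥤ Type} {X : m.Algebra} (u : A ⟶ X.A) : m.free.obj A ⟶ X where
  f := m.map u ≫ X.a
  h := by
    show m.map (m.map u ≫ X.a) ≫ X.a = m.μ.app A ≫ m.map u ≫ X.a
    simp [← X.assoc, ← m.μ.naturality_assoc]

lemma eta_hAdj {A : c ⥤ Type} {X : m.Algebra} (u : A ⟶ X.A) :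
    m.η.app A ≫ (hAdj m u).f = u := by
  show m.η.app A ≫ m.map u ≫ X.a = u
  rw [← Category.assoc, ← m.η.naturality u, Category.assoc, X.unit]
  simp

lemma hAdj_eta {A : c ⥤ Type} {X : m.Algebra} (h : m.free.obj A ⟶ X) :
    hAdj m (m.η.app A ≫ h.f) = h := by
  apply Monad.Algebra.Hom.ext
  show m.map (m.η.app A ≫ h.f) ≫ X.a = h.f
  have hh : m.map h.f ≫ X.a = m.μ.app A ≫ h.f := h.h
  erw [Functor.map_comp, Category.assoc, hh, ← Category.assoc, m.right_unit, Category.id_comp]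

section EncDec

variable {posm : c ⥤ Type} (arm : posm.Elementsᵒᵖ ⥤ c ⥤ Type)
variable (em : famApply posm arm ≅ (m : (c ⥤ Type) ⥤ c ⥤ Type))

/-- Encode a position/arity pair as an element of `m X`. -/
def enc (X : c ⥤ Type) {C : c}
    (s : Σ I : posm.obj C, arm.obj (op (posm.elementsMk C I)) ⟶ X) :
    ((m : (c ⥤ Type) ⥤ c ⥤ Type).obj X).obj C :=
  (em.hom.app X).app C s

/-- Decode an element of `m X` into a position/arity pair. -/
def dec (X : c ⥤ Type) {C : c} (ξ : ((m : (c ⥤ Type) ⥤ c ⥤ Type).obj X).obj C) :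
    Σ I : posm.obj C, arm.obj (op (posm.elementsMk C I)) ⟶ X :=
  (em.inv.app X).app C ξ

lemma enc_dec (X : c ⥤ Type) {C : c} (ξ : ((m : (c ⥤ Type) ⥤ c ⥤ Type).obj X).obj C) :
    enc m arm em X (dec m arm em X ξ) = ξ := by
  have h := types_congr_hom (NatTrans.congr_app (em.inv_hom_id_app X) C) ξ
  simp only [NatTrans.comp_app, types_comp_apply, NatTrans.id_app, types_id_apply] at h
  exact h

lemma dec_enc (X : c ⥤ Type) {C : c}
    (s : Σ I : posm.obj C, arm.obj (op (posm.elementsMk C I)) ⟶ X) :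
    dec m arm em X (enc m arm em X s) = s := by
  have h := types_congr_hom (NatTrans.congr_app (em.hom_inv_id_app X) C) s
  simp only [NatTrans.comp_app, types_comp_apply, NatTrans.id_app, types_id_apply] at h
  exact h

lemma map_enc {X Z : c ⥤ Type} (t : X ⟶ Z) {C : c}
    (s : Σ I : posm.obj C, arm.obj (op (posm.elementsMk C I)) ⟶ X) :
    ((m : (c ⥤ Type) ⥤ c ⥤ Type).map t).app C (enc m arm em X s)
      = enc m arm em Z ⟨s.1, s.2 ≫ t⟩ := by
  have h := types_congr_hom (NatTrans.congr_app (em.hom.naturality t) C) s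
  exact h.symm

lemma mapC_enc (X : c ⥤ Type) {C C' : c} (g : C ⟶ C')
    (s : Σ I : posm.obj C, arm.obj (op (posm.elementsMk C I)) ⟶ X) :
    ((m : (c ⥤ Type) ⥤ c ⥤ Type).obj X).map g (enc m arm em X s)
      = enc m arm em X ⟨posm.map g s.1, arm.map (elHom posm g s.1).op ≫ s.2⟩ := by
  have h := types_congr_hom ((em.hom.app X).naturality g) s
  exact h.symm

lemma dec_eta_nat {X Z : c ⥤ Type} (t : X ⟶ Z) {C : c} (x : X.obj C) :
    dec m arm em Z ((m.η.app Z).app C (t.app C x))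
      = ⟨(dec m arm em X ((m.η.app X).app C x)).1,
          (dec m arm em X ((m.η.app X).app C x)).2 ≫ t⟩ := by
  have hnat : (m.η.app Z).app C (t.app C x)
      = ((m : (c ⥤ Type) ⥤ c ⥤ Type).map t).app C ((m.η.app X).app C x) := by
    have h := types_congr_hom (NatTrans.congr_app (m.η.naturality t) C) x
    exact h
  rw [hnat]
  conv_lhs => rw [← enc_dec m arm em X ((m.η.app X).app C x)]
  rw [map_enc, dec_enc]

lemma dec_mapC (X : c ⥤ Type) {C C' : c} (g : C ⟶ C')
    (ξ : ((m : (c ⥤ Type) ⥤ c ⥤ Type).obj X).obj C) :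
    dec m arm em X (((m : (c ⥤ Type) ⥤ c ⥤ Type).obj X).map g ξ)
      = ⟨posm.map g (dec m arm em X ξ).1,
          arm.map (elHom posm g (dec m arm em X ξ).1).op ≫ (dec m arm em X ξ).2⟩ := by
  conv_lhs => rw [← enc_dec m arm em X ξ]
  rw [mapC_enc, dec_enc]

end EncDec

section TransSec

variable {posm : c ⥤ Type} (arm : posm.Elementsᵒᵖ ⥤ c ⥤ Type)
variable (em : famApply posm arm ≅ (m : (c ⥤ Type) ⥤ c ⥤ Type))
variable {X Y : m.Algebra}
variable (φ : (nerveFunctor m arm).obj X ⟶ (nerveFunctor m arm).obj Y)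

/-- Application of the natural transformation `φ` at an object of the theory category. -/
def φget {E : posm.Elements} (h : theoryObj m arm E ⟶ X) : theoryObj m arm E ⟶ Y :=
  φ.app (op (E : Theta m arm)) h

lemma φnat {E' E : posm.Elements} (k : theoryObj m arm E' ⟶ theoryObj m arm E)
    (h : theoryObj m arm E ⟶ X) :
    φget m arm φ (k ≫ h) = k ≫ φget m arm φ h := by
  exact types_congr_hom (φ.naturality
    (Quiver.Hom.op (show @Quiver.Hom (Theta m arm) _ E' E from InducedCategory.homMk k))) h

/-- The action of `φ` on adjuncts. -/
def ΦU {E : posm.Elements} (u : arm.obj (op E) ⟶ X.A) : arm.obj (op E) ⟶ Y.A :=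
  m.η.app _ ≫ (φget m arm φ (hAdj m u)).f

lemma ΦU_wcomp {E' E : posm.Elements} (w : arm.obj (op E') ⟶ (theoryObj m arm E).A)
    (h : theoryObj m arm E ⟶ X) :
    ΦU m arm φ (w ≫ h.f) = w ≫ (φget m arm φ h).f := by
  have h1 : w ≫ h.f = m.η.app _ ≫ ((hAdj m w : theoryObj m arm E' ⟶ theoryObj m arm E) ≫ h).f := by
    erw [Monad.Algebra.comp_f, ← Category.assoc, eta_hAdj]
  rw [h1]
  show m.η.app _ ≫ (φget m arm φ (hAdj m (m.η.app _ ≫ _))).f = _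
  erw [hAdj_eta, φnat, Monad.Algebra.comp_f, ← Category.assoc, eta_hAdj]

lemma ΦU_comp {E' E : posm.Elements} (t : arm.obj (op E') ⟶ arm.obj (op E))
    (u : arm.obj (op E) ⟶ X.A) :
    ΦU m arm φ (t ≫ u) = t ≫ ΦU m arm φ u := by
  have h1 : t ≫ u = (t ≫ m.η.app (arm.obj (op E))) ≫ (hAdj m u).f := by
    erw [Category.assoc, eta_hAdj]
  erw [h1, ΦU_wcomp, Category.assoc]

/-- The underlying natural transformation of the algebra map induced by `φ`. -/
def transF : X.A ⟶ Y.A where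
  app C := TypeCat.ofHom fun x =>
    Y.a.app C (enc m arm em Y.A
      ⟨(dec m arm em X.A ((m.η.app X.A).app C x)).1,
        ΦU m arm φ (dec m arm em X.A ((m.η.app X.A).app C x)).2⟩)
  naturality C C' g := by
    refine ConcreteCategory.ext_apply fun x => ?_
    show Y.a.app C' (enc m arm em Y.A _) = Y.A.map g (Y.a.app C (enc m arm em Y.A _))
    have h0 : (m.η.app X.A).app C' (X.A.map g x)
        = ((m : (c ⥤ Type) ⥤ c ⥤ Type).obj X.A).map g ((m.η.app X.A).app C x) :=
      types_congr_hom ((m.η.app X.A).naturality g) x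
    erw [h0, dec_mapC]
    dsimp only
    rw [ΦU_comp, ← mapC_enc m arm em Y.A g
      ⟨(dec m arm em X.A ((m.η.app X.A).app C x)).1,
        ΦU m arm φ (dec m arm em X.A ((m.η.app X.A).app C x)).2⟩]
    have h1 := types_congr_hom (Y.a.naturality g)
      (enc m arm em Y.A ⟨(dec m arm em X.A ((m.η.app X.A).app C x)).1,
        ΦU m arm φ (dec m arm em X.A ((m.η.app X.A).app C x)).2⟩)
    exact h1

lemma transF_ar {E : posm.Elements} (u : arm.obj (op E) ⟶ X.A) {C' : c}
    (a : (arm.obj (op E)).obj C') :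
    (transF m arm em φ).app C' (u.app C' a) = (ΦU m arm φ u).app C' a := by
  show Y.a.app C' (enc m arm em Y.A _) = _
  rw [dec_eta_nat m arm em u a]
  dsimp only
  rw [ΦU_comp, ← map_enc m arm em (ΦU m arm φ u)
    (dec m arm em (arm.obj (op E)) ((m.η.app (arm.obj (op E))).app C' a)), enc_dec]
  have h0 : ((m : (c ⥤ Type) ⥤ c ⥤ Type).map (ΦU m arm φ u)).app C'
        ((m.η.app (arm.obj (op E))).app C' a)
      = (m.η.app Y.A).app C' ((ΦU m arm φ u).app C' a) := by
    have h := types_congr_hom (NatTrans.congr_app (m.η.naturality (ΦU m arm φ u)) C') a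
    exact h.symm
  rw [h0]
  have h1 := types_congr_hom (NatTrans.congr_app Y.unit C') ((ΦU m arm φ u).app C' a)
  exact h1

lemma comp_transF {E : posm.Elements} (u : arm.obj (op E) ⟶ X.A) :
    u ≫ transF m arm em φ = ΦU m arm φ u := by
  apply NatTrans.ext
  funext C'
  refine ConcreteCategory.ext_apply fun a => ?_
  exact transF_ar m arm em φ u a

lemma transF_alg : (m : (c ⥤ Type) ⥤ c ⥤ Type).map (transF m arm em φ) ≫ Y.a
    = X.a ≫ transF m arm em φ := by
  apply NatTrans.ext
  funext C
  refine ConcreteCategory.ext_apply fun ξ => ?_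
  set s := dec m arm em X.A ξ with hs
  set A := arm.obj (op (posm.elementsMk C s.1)) with hA
  set u : A ⟶ X.A := s.2 with hu
  set γ := enc m arm em A ⟨s.1, 𝟙 A⟩ with hγ
  set p : theoryObj m arm (posm.elementsMk C s.1) ⟶ Y := φget m arm φ (hAdj m u) with hp
  have hξ2 : ξ = enc m arm em X.A ⟨s.1, u⟩ := by
    have h := enc_dec m arm em X.A ξ
    rw [← hs] at h
    exact h.symm
  have hξ : ξ = ((m : (c ⥤ Type) ⥤ c ⥤ Type).map u).app C γ := by
    rw [hξ2, hγ, map_enc m arm em u ⟨s.1, 𝟙 A⟩, Category.id_comp]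
  -- p as an algebra hom: Y.a ∘ m.map p.f = p.f ∘ μ
  have hpalg : ∀ ζ : ((m : (c ⥤ Type) ⥤ c ⥤ Type).obj ((m : (c ⥤ Type) ⥤ c ⥤ Type).obj A)).obj C,
      Y.a.app C (((m : (c ⥤ Type) ⥤ c ⥤ Type).map p.f).app C ζ)
        = p.f.app C ((m.μ.app A).app C ζ) := by
    intro ζ
    have h := types_congr_hom (NatTrans.congr_app p.h C) ζ
    simp only [NatTrans.comp_app, types_comp_apply] at h
    exact h
  -- LHS : Y.a (m.map f ξ)
  have hL : Y.a.app C (((m : (c ⥤ Type) ⥤ c ⥤ Type).map (transF m arm em φ)).app C ξ)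
      = p.f.app C γ := by
    have e1 : ((m : (c ⥤ Type) ⥤ c ⥤ Type).map (transF m arm em φ)).app C ξ
        = enc m arm em Y.A ⟨s.1, u ≫ transF m arm em φ⟩ := by
      rw [hξ2, map_enc m arm em (transF m arm em φ) ⟨s.1, u⟩]
    rw [e1, comp_transF]
    have e2 : ΦU m arm φ u = m.η.app A ≫ p.f := rfl
    rw [e2]
    have e3 : enc m arm em Y.A ⟨s.1, m.η.app A ≫ p.f⟩
        = ((m : (c ⥤ Type) ⥤ c ⥤ Type).map p.f).app C
            (((m : (c ⥤ Type) ⥤ c ⥤ Type).map (m.η.app A)).app C γ) := by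
      rw [hγ, map_enc m arm em (X := A) (m.η.app A) ⟨s.1, 𝟙 A⟩, Category.id_comp]
      dsimp only
      erw [map_enc m arm em (X := (m : (c ⥤ Type) ⥤ c ⥤ Type).obj A) p.f ⟨s.1, m.η.app A⟩]
    rw [e3, hpalg]
    have e4 : (m.μ.app A).app C (((m : (c ⥤ Type) ⥤ c ⥤ Type).map (m.η.app A)).app C γ) = γ := by
      have h := types_congr_hom (NatTrans.congr_app (m.right_unit A) C) γ
      exact h
    rw [e4]
  -- RHS : f (X.a ξ)
  have hR : (transF m arm em φ).app C (X.a.app C ξ) = p.f.app C γ := by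
    have e1 : X.a.app C ξ = (hAdj m u).f.app C γ := by rw [hξ]; rfl
    rw [e1]
    show Y.a.app C (enc m arm em Y.A _) = _
    rw [dec_eta_nat m arm em (hAdj m u).f γ]
    dsimp only
    erw [ΦU_wcomp m arm φ
        (dec m arm em (m.free.obj A).A ((m.η.app (m.free.obj A).A).app C γ)).2 (hAdj m u), ← hp,
      ← map_enc m arm em (X := (m.free.obj A).A) p.f
        (dec m arm em (m.free.obj A).A ((m.η.app (m.free.obj A).A).app C γ)),
      enc_dec m arm em (m.free.obj A).A, hpalg]
    have e3 : (m.μ.app A).app C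
        ((m.η.app (m.free.obj A).A).app C γ) = γ := by
      have h := types_congr_hom (NatTrans.congr_app (m.left_unit A) C) γ
      exact h
    rw [e3]
  show Y.a.app C (((m : (c ⥤ Type) ⥤ c ⥤ Type).map (transF m arm em φ)).app C ξ)
    = (transF m arm em φ).app C (X.a.app C ξ)
  rw [hL, hR]

/-- The algebra morphism induced by `φ`. -/
def transAlg : X ⟶ Y where
  f := transF m arm em φ
  h := transF_alg m arm em φ

lemma φget_eq {E : posm.Elements} (h : theoryObj m arm E ⟶ X) :
    φget m arm φ h = h ≫ transAlg m arm em φ := by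
  have e1 : ΦU m arm φ (m.η.app (arm.obj (op E)) ≫ h.f)
      = m.η.app (arm.obj (op E)) ≫ (φget m arm φ h).f := by
    show m.η.app _ ≫ (φget m arm φ (hAdj m (m.η.app _ ≫ h.f))).f = _
    erw [hAdj_eta]
  have e2 : ΦU m arm φ (m.η.app (arm.obj (op E)) ≫ h.f)
      = m.η.app (arm.obj (op E)) ≫ (h ≫ transAlg m arm em φ).f := by
    rw [← comp_transF m arm em φ (m.η.app (arm.obj (op E)) ≫ h.f)]
    erw [Monad.Algebra.comp_f, Category.assoc]
  erw [← hAdj_eta m (φget m arm φ h), ← e1, e2, hAdj_eta]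

end TransSec

/-- Weber's nerve theorem, fully faithfulness part.
For a familial (and cartesian) monad `m` on `c ⥤ Type`, the restricted Yoneda nerve functor
`N_m : m-Alg ⥤ (Θ_mᵒᵖ ⥤ Type)` is fully faithful. -/
theorem nerveFunctor_full_and_faithful
    (em : famApply posm arm ≅ (m : (c ⥤ Type) ⥤ c ⥤ Type))
    (hUnitCartesian : ∀ {X Y : c ⥤ Type} (f : X ⟶ Y),
      IsPullback f (m.η.app X) (m.η.app Y) ((m : (c ⥤ Type) ⥤ c ⥤ Type).map f))
    (hMultCartesian : ∀ {X Y : c ⥤ Type} (f : X ⟶ Y),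
      IsPullback ((m : (c ⥤ Type) ⥤ c ⥤ Type).map ((m : (c ⥤ Type) ⥤ c ⥤ Type).map f))
        (m.μ.app X) (m.μ.app Y) ((m : (c ⥤ Type) ⥤ c ⥤ Type).map f)) :
    (nerveFunctor m arm).Full ∧ (nerveFunctor m arm).Faithful := by
  constructor
  · refine ⟨fun {X Y} φ => ⟨transAlg m arm em φ, ?_⟩⟩
    apply NatTrans.ext
    funext E
    refine ConcreteCategory.ext_apply fun h => ?_
    exact (φget_eq m arm em φ h).symm
  · refine ⟨fun {X Y} f g hfg => ?_⟩
    apply Monad.Algebra.Hom.ext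
    apply NatTrans.ext
    funext C
    refine ConcreteCategory.ext_apply fun x => ?_
    set s := dec m arm em X.A ((m.η.app X.A).app C x) with hs
    have hx : x = X.a.app C (enc m arm em X.A s) := by
      rw [hs, enc_dec]
      exact (types_congr_hom (NatTrans.congr_app X.unit C) x).symm
    have key : s.2 ≫ f.f = s.2 ≫ g.f := by
      have h1 : hAdj m s.2 ≫ f = hAdj m s.2 ≫ g := by
        have h2 := types_congr_hom (NatTrans.congr_app hfg
          (op ((posm.elementsMk C s.1) : Theta m arm))) (hAdj m s.2)
        exact h2
      calc s.2 ≫ f.f = m.η.app _ ≫ (hAdj m s.2 ≫ f).f := by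
            erw [Monad.Algebra.comp_f, ← Category.assoc, eta_hAdj]
        _ = m.η.app _ ≫ (hAdj m s.2 ≫ g).f := by rw [h1]
        _ = s.2 ≫ g.f := by erw [Monad.Algebra.comp_f, ← Category.assoc, eta_hAdj]
    have hf : ∀ t : X ⟶ Y,
        t.f.app C x = Y.a.app C (enc m arm em Y.A ⟨s.1, s.2 ≫ t.f⟩) := by
      intro t
      conv_lhs => rw [hx]
      have halg := types_congr_hom (NatTrans.congr_app t.h C) (enc m arm em X.A s)
      have h3 : t.f.app C (X.a.app C (enc m arm em X.A s))
          = Y.a.app C (((m : (c ⥤ Type) ⥤ c ⥤ Type).map t.f).app C (enc m arm em X.A s)) :=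
        halg.symm
      rw [h3, map_enc m arm em t.f s]
    rw [hf f, hf g, key]

end Statement5

end Fam
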